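/- The exchange relation of clusters is an involution: let (P,⊕) be a semifield, K a field, and ι : P → K∖{0} a map with ι(a·b) = ι(a)·ι(b) for all a,b ∈ P. Let I be a finite index set, B = (B_{ij})_{i,j∈I} an integer matrix with B_{kk} = 0, k ∈ I, x = (x_i)_{i∈I} a family of nonzero elements of K, and y_k ∈ P. Define x'_i = x_i for i ≠ k and x'_k = (ι(y_k)·∏_{j : B_{jk} > 0} x_j^{B_{jk}} + ∏_{j : B_{jk} < 0} x_j^{−B_{jk}}) / (ι(1⊕y_k)·x_k), and assume x'_k ≠ 0. Let B' = μ_k(B) and y'_k = y_k^{-1}, and define x''_k = (ι(y'_k)·∏_{j : B'_{jk} > 0} (x'_j)^{B'_{jk}} + ∏_{j : B'_{jk} < 0} (x'_j)^{−B'_{jk}}) / (ι(1⊕y'_k)·x'_k). Then x''_k = x_k. -/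

import Mathlib

open Finset

/-- Mutation of an integer matrix at index `k` (the matrix mutation underlying
seed mutation in the theory of cluster algebras with coefficients). -/
def mutateMat {I : Type*} [Fintype I] [DecidableEq I]
    (B : Matrix I I ℤ) (k : I) : Matrix I I ℤ :=
  Matrix.of fun i j =>
    if i = k ∨ j = k then -B i j
    else B i j + (|B i k| * B k j + B i k * |B k j|) / 2

/-- The exchange relation of clusters is an involution.
Here `(P, op)` is a semifield (an abelian multiplicative group with a commutative,
associative, multiplication-distributive addition `op`), `K` is a field, and
`ι : P → K ∖ {0}` is multiplicative. -/
theorem cluster_mutation_involution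
    {P : Type*} [CommGroup P] (op : P → P → P)
    (hcomm : ∀ a b : P, op a b = op b a)
    (hassoc : ∀ a b c : P, op (op a b) c = op a (op b c))
    (hdistrib : ∀ a b c : P, a * op b c = op (a * b) (a * c))
    {K : Type*} [Field K]
    (ι : P → K) (hι : ∀ a b : P, ι (a * b) = ι a * ι b) (hι0 : ∀ a : P, ι a ≠ 0)
    {I : Type*} [Fintype I] [DecidableEq I]
    (B : Matrix I I ℤ) (k : I) (hBkk : B k k = 0)
    (x : I → K) (hx : ∀ i, x i ≠ 0) (yk : P)
    (x' : I → K)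
    (hx'ne : ∀ i, i ≠ k → x' i = x i)
    (hx'k : x' k =
      (ι yk * ∏ j ∈ univ.filter (fun j => 0 < B j k), x j ^ (B j k) +
        ∏ j ∈ univ.filter (fun j => B j k < 0), x j ^ (-(B j k))) /
      (ι (op 1 yk) * x k))
    (hx'k0 : x' k ≠ 0)
    (x''k : K)
    (hx''k : x''k =
      (ι yk⁻¹ * ∏ j ∈ univ.filter (fun j => 0 < mutateMat B k j k), x' j ^ (mutateMat B k j k) +
        ∏ j ∈ univ.filter (fun j => mutateMat B k j k < 0), x' j ^ (-(mutateMat B k j k))) /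
      (ι (op 1 yk⁻¹) * x' k)) :
    x''k = x k := by

  have hmut : ∀ j, mutateMat B k j k = -(B j k) := by
    intro j; simp [mutateMat]
  have hι1 : ι (1 : P) = 1 := by
    have h : ι 1 * ι 1 = ι 1 * 1 := by rw [← hι]; simp
    exact mul_left_cancel₀ (hι0 1) h
  have hinv : ι yk⁻¹ = (ι yk)⁻¹ := by
    apply eq_inv_of_mul_eq_one_left
    rw [← hι]; simp [hι1]
  have hop : op 1 yk⁻¹ = yk⁻¹ * op 1 yk := by
    rw [hdistrib, mul_one, inv_mul_cancel, hcomm]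
  set A := ∏ j ∈ univ.filter (fun j => 0 < B j k), x j ^ (B j k) with hA
  set C := ∏ j ∈ univ.filter (fun j => B j k < 0), x j ^ (-(B j k)) with hC
  have hprod1 : ∏ j ∈ univ.filter (fun j => 0 < mutateMat B k j k),
      x' j ^ (mutateMat B k j k) = C := by
    rw [hC]
    rw [show (univ.filter (fun j => 0 < mutateMat B k j k))
        = univ.filter (fun j => B j k < 0) by ext j; simp [hmut j]]
    apply Finset.prod_congr rfl
    intro j hj
    simp only [mem_filter] at hj
    have hjk : j ≠ k := fun h => by simp [h, hBkk] at hj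
    rw [hx'ne j hjk, hmut j]
  have hprod2 : ∏ j ∈ univ.filter (fun j => mutateMat B k j k < 0),
      x' j ^ (-(mutateMat B k j k)) = A := by
    rw [hA]
    rw [show (univ.filter (fun j => mutateMat B k j k < 0))
        = univ.filter (fun j => 0 < B j k) by ext j; simp [hmut j]]
    apply Finset.prod_congr rfl
    intro j hj
    simp only [mem_filter] at hj
    have hjk : j ≠ k := fun h => by simp [h, hBkk] at hj
    rw [hx'ne j hjk, hmut j, neg_neg]
  have hN : ι yk * A + C ≠ 0 := by
    intro h
    apply hx'k0
    rw [hx'k, h, zero_div]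
  rw [hx''k, hprod1, hprod2, hop, hι, hinv, hx'k]
  have hN' : C * ι (op 1 yk) + ι yk * A * ι (op 1 yk) ≠ 0 := by
    have h : C * ι (op 1 yk) + ι yk * A * ι (op 1 yk) = (ι yk * A + C) * ι (op 1 yk) := by
      ring
    rw [h]; exact mul_ne_zero hN (hι0 _)
  have hN'' : C * ι yk * ι (op 1 yk) + A * ι yk ^ 2 * ι (op 1 yk) ≠ 0 := by
    have h : C * ι yk * ι (op 1 yk) + A * ι yk ^ 2 * ι (op 1 yk)
        = ι yk * ((ι yk * A + C) * ι (op 1 yk)) := by ring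
    rw [h]; exact mul_ne_zero (hι0 _) (mul_ne_zero hN (hι0 _))
  field_simp [hι0 yk, hN', hN'']
  rw [div_eq_iff (hι0 _)]
  ring
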